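/- arXiv:1406.3732 — 3 statements merged into one kernel-verified Lean document; each statement's English description precedes it below -/
import Mathlib

section
/- Let μ ∈ ℝ and k ∈ {0,1,2,…} be such that neither μ − k nor μ − k − 1 lies in {0, −1, −2, …}, and define φ_k(z) = Σ_{n≥0} (−z²/4)^n / (((μ−k+2)/2)_n ((μ−k+3)/2)_n). Then for all z ∈ ℂ the recurrence (μ − k + 1)·φ_{k+1}(z) = (μ − k + 1)·φ_k(z) + z·φ_k'(z) holds. -/
open scoped BigOperators
open Filter Topology

/-- The Pochhammer symbol `(a)_n = a (a+1) ⋯ (a+n-1)`. -/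
noncomputable def poch (a : ℝ) (n : ℕ) : ℝ := ∏ i ∈ Finset.range n, (a + i)

/-- The entire function `φ_k(z) = Σ_{n≥0} (−z²/4)^n / (((μ−k+2)/2)_n ((μ−k+3)/2)_n)`. -/
noncomputable def phik (μ : ℝ) (k : ℕ) (z : ℂ) : ℂ :=
  ∑' n : ℕ, (-z ^ 2 / 4) ^ n /
    ((poch ((μ - k + 2) / 2) n : ℂ) * (poch ((μ - k + 3) / 2) n : ℂ))

lemma poch_succ (a : ℝ) (n : ℕ) : poch a (n+1) = poch a n * (a + n) := by
  simp [poch, Finset.prod_range_succ]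

lemma poch_ne_zero {a : ℝ} (h : ∀ i : ℕ, a + i ≠ 0) (n : ℕ) : poch a n ≠ 0 :=
  Finset.prod_ne_zero_iff.mpr fun i _ => h i

lemma poch_key (a : ℝ) (n : ℕ) : a * poch (a+1) n = (a + n) * poch a n := by
  induction n with
  | zero => simp [poch]
  | succ n ih =>
    rw [poch_succ, poch_succ, ← mul_assoc, ih]
    push_cast; ring

lemma summable_aux (a b : ℝ) (ha : ∀ i : ℕ, a + i ≠ 0) (hb : ∀ i : ℕ, b + i ≠ 0)
    (x : ℝ) (hx : 0 < x) :
    Summable (fun n : ℕ => ((n:ℝ)+1) * x ^ n / |poch a n * poch b n|) := by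
  have hpos : ∀ n : ℕ, 0 < ((n:ℝ)+1) * x ^ n / |poch a n * poch b n| := by
    intro n
    apply div_pos (by positivity)
    exact abs_pos.mpr (mul_ne_zero (poch_ne_zero ha n) (poch_ne_zero hb n))
  apply summable_of_ratio_test_tendsto_lt_one (l := 0) one_pos
    (Eventually.of_forall fun n => (hpos n).ne')
  have hrepr : ∀ n : ℕ, ‖(((n+1:ℕ):ℝ)+1) * x ^ (n+1) / |poch a (n+1) * poch b (n+1)|‖ /
      ‖((n:ℝ)+1) * x ^ n / |poch a n * poch b n|‖ =
      (((n:ℝ)+2)/((n:ℝ)+1)) * x / (|a + n| * |b + n|) := by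
    intro n
    rw [Real.norm_eq_abs, Real.norm_eq_abs, abs_of_pos (hpos (n+1)), abs_of_pos (hpos n)]
    push_cast
    rw [poch_succ, poch_succ]
    have h1 : |poch a n * poch b n| ≠ 0 :=
      abs_ne_zero.mpr (mul_ne_zero (poch_ne_zero ha n) (poch_ne_zero hb n))
    rw [show poch a n * (a + ↑n) * (poch b n * (b + ↑n)) =
      (poch a n * poch b n) * ((a+n)*(b+n)) by ring,
      abs_mul (poch a n * poch b n), abs_mul (a + (n:ℝ))]
    have hp : (0:ℝ) < |poch a n * poch b n| := h1.lt_of_le' (abs_nonneg _)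
    have hA : (0:ℝ) < |a + (n:ℝ)| := abs_pos.mpr (ha n)
    have hB : (0:ℝ) < |b + (n:ℝ)| := abs_pos.mpr (hb n)
    generalize |poch a n * poch b n| = P at hp ⊢
    generalize |a + (n:ℝ)| = A at hA ⊢
    generalize |b + (n:ℝ)| = B at hB ⊢
    push_cast
    rw [pow_succ]
    field_simp
    ring
  simp_rw [hrepr]
  have hab : Tendsto (fun n : ℕ => |a + (n:ℝ)| * |b + (n:ℝ)|) atTop atTop := by
    apply Tendsto.atTop_mul_atTop₀ <;>
    · apply tendsto_abs_atTop_atTop.comp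
      exact tendsto_atTop_add_const_left _ _ tendsto_natCast_atTop_atTop
  have h2 : Tendsto (fun n : ℕ => (2*x) / (|a + (n:ℝ)| * |b + (n:ℝ)|)) atTop (𝓝 0) := by
    simpa [div_eq_mul_inv] using (tendsto_inv_atTop_zero.comp hab).const_mul (2*x)
  apply squeeze_zero (fun n => by positivity) _ h2
  intro n
  have hd : (0:ℝ) < |a + (n:ℝ)| * |b + (n:ℝ)| := by
    have := mul_ne_zero (ha n) (hb n)
    have h1 : |a + (n:ℝ)| ≠ 0 := abs_ne_zero.mpr (ha n)
    have h2 : |b + (n:ℝ)| ≠ 0 := abs_ne_zero.mpr (hb n)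
    positivity
  have h3 : ((n:ℝ)+2)/((n:ℝ)+1) ≤ 2 := by
    rw [div_le_iff₀ (by positivity)]; nlinarith [Nat.cast_nonneg (α := ℝ) n]
  gcongr

lemma div_le_div_of_nonneg_right' {a b c : ℝ} (h : a ≤ b) (hc : 0 < c) :
    a / c ≤ b / c := div_le_div_of_nonneg_right h hc.le

/-- If neither `μ − k` nor `μ − k − 1` lies in `{0, −1, −2, …}`, then
`(μ − k + 1) φ_{k+1}(z) = (μ − k + 1) φ_k(z) + z φ_k'(z)` for all `z ∈ ℂ`. -/
theorem phik_recurrence (μ : ℝ) (k : ℕ)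
    (hμk : ∀ m : ℕ, μ - k ≠ -(m : ℝ))
    (hμk' : ∀ m : ℕ, μ - k - 1 ≠ -(m : ℝ)) :
    ∀ z : ℂ,
      ((μ : ℂ) - k + 1) * phik μ (k + 1) z =
        ((μ : ℂ) - k + 1) * phik μ k z + z * deriv (phik μ k) z := by
  intro z
  set A : ℝ := (μ - k + 2) / 2 with hA
  set B : ℝ := (μ - k + 3) / 2 with hB
  set C : ℝ := (μ - k + 1) / 2 with hC
  have haA : ∀ i : ℕ, A + i ≠ 0 := by
    intro i h
    apply hμk (2 + 2*i)
    rw [hA] at h; push_cast; linarith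
  have hbB : ∀ i : ℕ, B + i ≠ 0 := by
    intro i h
    apply hμk (3 + 2*i)
    rw [hB] at h; push_cast; linarith
  have hcC : ∀ i : ℕ, C + i ≠ 0 := by
    intro i h
    apply hμk (1 + 2*i)
    rw [hC] at h; push_cast; linarith
  set f : ℕ → ℂ → ℂ := fun n w => (-w ^ 2 / 4) ^ n /
      ((poch A n : ℂ) * (poch B n : ℂ)) with hf
  set f' : ℕ → ℂ → ℂ := fun n w => ((n : ℂ) * (-w ^ 2 / 4) ^ (n - 1) * (-w / 2)) /
      ((poch A n : ℂ) * (poch B n : ℂ)) with hf'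
  have hphik : phik μ k = fun w => ∑' n, f n w := rfl
  -- derivatives of individual terms
  have hterm : ∀ (n : ℕ) (w : ℂ), HasDerivAt (f n) (f' n w) w := by
    intro n w
    have h0 : HasDerivAt (fun w : ℂ => -w ^ 2 / 4) (-w / 2) w := by
      have := ((hasDerivAt_pow 2 w).neg).div_const 4
      refine this.congr_deriv ?_
      push_cast; ring
    exact (h0.pow n).div_const _
  -- norm of terms
  have hnorm : ∀ (n : ℕ) (w : ℂ), ‖f n w‖ = (‖w‖^2/4) ^ n / |poch A n * poch B n| := by
    intro n w
    simp [hf, abs_mul, norm_div, norm_mul, norm_pow, mul_comm]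
  have hnorm' : ∀ (n : ℕ) (w : ℂ),
      ‖f' n w‖ = (n : ℝ) * (‖w‖^2/4) ^ (n-1) * (‖w‖/2) / |poch A n * poch B n| := by
    intro n w
    simp [hf', abs_mul, norm_div, norm_mul, norm_pow]
  have hden : ∀ n : ℕ, (0:ℝ) < |poch A n * poch B n| :=
    fun n => abs_pos.mpr (mul_ne_zero (poch_ne_zero haA n) (poch_ne_zero hbB n))
  -- pointwise summability
  have hsum : ∀ w : ℂ, Summable fun n => f n w := by
    intro w
    apply Summable.of_norm_bounded
      (summable_aux A B haA hbB (‖w‖^2/4 + 1) (by positivity))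
    intro n
    rw [hnorm]
    have hb : (‖w‖^2/4) ^ n ≤ ((n:ℝ)+1) * (‖w‖^2/4+1) ^ n := by
      nlinarith [pow_nonneg (by positivity : (0:ℝ) ≤ ‖w‖^2/4+1) n,
        pow_le_pow_left₀ (by positivity : (0:ℝ) ≤ ‖w‖^2/4)
          (by linarith : ‖w‖^2/4 ≤ ‖w‖^2/4+1) n, Nat.cast_nonneg (α := ℝ) n]
    exact div_le_div_of_nonneg_right' hb (hden n)
  -- bound for derivatives on a ball
  set R : ℝ := max 2 (‖z‖ + 1) with hR
  have hR2 : (2:ℝ) ≤ R := le_max_left _ _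
  have hRpos : (0:ℝ) < R := by linarith
  set u : ℕ → ℝ := fun n => (R/2) * (((n:ℝ)+1) * (R^2/4) ^ n / |poch A n * poch B n|)
    with hu_def
  have hu : Summable u :=
    (summable_aux A B haA hbB (R^2/4) (by positivity)).mul_left (R/2)
  have hball : ∀ (n : ℕ) (w : ℂ), w ∈ Metric.ball (0:ℂ) R → ‖f' n w‖ ≤ u n := by
    intro n w hw
    rw [Metric.mem_ball, dist_zero_right] at hw
    rw [hnorm', hu_def]
    have h1 : (1:ℝ) ≤ R^2/4 := by nlinarith
    have h2 : (‖w‖^2/4) ^ (n-1) ≤ (R^2/4) ^ n := by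
      calc (‖w‖^2/4) ^ (n-1) ≤ (R^2/4) ^ (n-1) :=
            pow_le_pow_left₀ (by positivity) (by nlinarith [norm_nonneg w]) (n-1)
        _ ≤ (R^2/4) ^ n := pow_le_pow_right₀ h1 (Nat.sub_le n 1)
    calc (n:ℝ) * (‖w‖^2/4) ^ (n-1) * (‖w‖/2) / |poch A n * poch B n|
        ≤ ((n:ℝ)+1) * (R^2/4) ^ n * (R/2) / |poch A n * poch B n| := by
          have hnum : (n:ℝ) * (‖w‖^2/4) ^ (n-1) * (‖w‖/2)
              ≤ ((n:ℝ)+1) * (R^2/4) ^ n * (R/2) := by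
            have h3 : (0:ℝ) ≤ (n:ℝ) := Nat.cast_nonneg n
            have h4 : (0:ℝ) ≤ (‖w‖^2/4) ^ (n-1) := by positivity
            have h5 : (0:ℝ) ≤ ‖w‖ := norm_nonneg w
            have h6 : (0:ℝ) ≤ (R^2/4)^n := by positivity
            nlinarith [mul_le_mul (mul_le_mul (by linarith : (n:ℝ) ≤ (n:ℝ)+1) h2 h4
              (by linarith)) (by linarith : ‖w‖/2 ≤ R/2) (by linarith) (by positivity)]
          exact div_le_div_of_nonneg_right' hnum (hden n)
      _ = (R/2) * (((n:ℝ)+1) * (R^2/4) ^ n / |poch A n * poch B n|) := by ring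
  have hzball : z ∈ Metric.ball (0:ℂ) R := by
    rw [Metric.mem_ball, dist_zero_right]
    exact lt_of_lt_of_le (by linarith) (le_max_right _ _)
  have h0ball : (0:ℂ) ∈ Metric.ball (0:ℂ) R := by
    rw [Metric.mem_ball, dist_self]; linarith
  have hderiv : HasDerivAt (phik μ k) (∑' n, f' n z) z := by
    rw [hphik]
    exact hasDerivAt_tsum_of_isPreconnected hu Metric.isOpen_ball
      (convex_ball _ _).isPreconnected (fun n y _ => hterm n y) hball h0ball
      (hsum 0) hzball
  rw [hderiv.deriv]
  -- summability of z * f' n z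
  have hsum' : Summable fun n => f' n z :=
    Summable.of_norm_bounded hu fun n => hball n z hzball
  -- rewrite phik (k+1)
  have hC1 : (μ - ((k+1 : ℕ):ℝ) + 2)/2 = C := by push_cast; rw [hC]; ring
  have hA1 : (μ - ((k+1 : ℕ):ℝ) + 3)/2 = A := by push_cast; rw [hA]; ring
  have hphik1 : phik μ (k+1) z =
      ∑' n, (-z ^ 2 / 4) ^ n / ((poch C n : ℂ) * (poch A n : ℂ)) := by
    unfold phik
    rw [hC1, hA1]
  rw [hphik1, hphik]
  rw [← tsum_mul_left, ← tsum_mul_left, ← tsum_mul_left,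
    ← Summable.tsum_add ((hsum z).mul_left _) (hsum'.mul_left z)]
  apply tsum_congr
  intro n
  -- termwise identity
  have hzf' : z * f' n z = (2 * (n:ℂ)) * (-z ^ 2 / 4) ^ n /
      ((poch A n : ℂ) * (poch B n : ℂ)) := by
    cases n with
    | zero => simp [hf']
    | succ m =>
      rw [hf']
      simp only [Nat.add_sub_cancel]
      rw [pow_succ]
      push_cast
      ring
  rw [hzf']
  simp only [hf]
  have hBC : B = C + 1 := by rw [hB, hC]; ring
  have key : (C:ℂ) * ((poch B n : ℝ) : ℂ) = ((C:ℝ) + (n:ℝ) : ℂ) * ((poch C n : ℝ):ℂ) := by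
    rw [hBC]
    exact_mod_cast congrArg (fun x : ℝ => (x : ℂ)) (poch_key C n)
  have hcast : ((μ : ℂ) - k + 1) = ((2 * C : ℝ) : ℂ) := by
    rw [hC]; push_cast; ring
  have hCn : ((poch C n : ℝ):ℂ) ≠ 0 := by
    exact_mod_cast Complex.ofReal_ne_zero.mpr (poch_ne_zero hcC n)
  have hAn : ((poch A n : ℝ):ℂ) ≠ 0 := by
    exact_mod_cast Complex.ofReal_ne_zero.mpr (poch_ne_zero haA n)
  have hBn : ((poch B n : ℝ):ℂ) ≠ 0 := by
    exact_mod_cast Complex.ofReal_ne_zero.mpr (poch_ne_zero hbB n)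
  rw [hcast]
  generalize (-z ^ 2 / 4) ^ n = T
  push_cast at key ⊢
  field_simp
  linear_combination T * key
end

section
/- Let p(x) = 1 − a₁x + a₂x² − ⋯ + (−1)ⁿ aₙ xⁿ = (1 − x/x₁)⋯(1 − x/xₙ) be a real polynomial all of whose zeros 0 < x₁ ≤ x₂ ≤ ⋯ ≤ xₙ are real and positive, normalized by p(0) = 1. Then for any real constant C, the polynomial q(x) = C·p(x) − x·p'(x) has only real zeros; moreover, the smallest zero η₁ of q belongs to the interval (0, x₁) if and only if C < 0. -/
open scoped BigOperators

open Polynomial Finset in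

lemma derivative_finset_prod {R : Type} [CommSemiring R] (s : Finset ℕ) (f : ℕ → Polynomial R) :
    Polynomial.derivative (∏ j ∈ s, f j)
      = ∑ j ∈ s, (∏ k ∈ s.erase j, f k) * Polynomial.derivative (f j) := by
  induction s using Finset.induction_on with
  | empty => simp
  | insert a s ha ih =>
    rw [Finset.prod_insert ha, Polynomial.derivative_mul, ih, Finset.sum_insert ha,
      Finset.erase_insert ha, Finset.mul_sum]
    congr 1
    · ring_nf
    · apply Finset.sum_congr rfl
      intro j hj
      rw [Finset.erase_insert_of_ne (by rintro rfl; exact ha hj),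
        Finset.prod_insert (by simp [ha, Finset.mem_erase])]
      ring


open Polynomial Finset in
lemma key_identity {K : Type} [Field K] [Algebra ℝ K] (n : ℕ) (x : ℕ → ℝ)
    (hx : ∀ j, j < n → x j ≠ 0) (c : ℝ) (P Q : Polynomial ℝ)
    (hP : P = ∏ j ∈ Finset.range n, (1 - Polynomial.C (x j)⁻¹ * Polynomial.X))
    (hQ : Q = Polynomial.C c * P - Polynomial.X * Polynomial.derivative P)
    (z : K) (hz : ∀ j, j < n → z ≠ algebraMap ℝ K (x j)) :
    Polynomial.aeval z Q =
      (∏ j ∈ Finset.range n, (1 - z * (algebraMap ℝ K (x j))⁻¹)) *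
        (algebraMap ℝ K c - ∑ j ∈ Finset.range n, z / (z - algebraMap ℝ K (x j))) := by
  subst hQ hP
  have hA : ∀ j, j < n → algebraMap ℝ K (x j) ≠ 0 := by
    intro j hj h
    exact hx j hj ((map_eq_zero_iff _ (algebraMap ℝ K).injective).mp h)
  rw [derivative_finset_prod]
  simp only [map_sub, map_mul, map_sum, map_prod, map_one, aeval_C, aeval_X,
    Polynomial.derivative_sub, Polynomial.derivative_one, Polynomial.derivative_C_mul,
    Polynomial.derivative_X, mul_one, zero_sub, map_inv₀, map_neg]
  have hcomm : ∀ k, (1:K) - ((algebraMap ℝ K) (x k))⁻¹ * z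
      = 1 - z * ((algebraMap ℝ K) (x k))⁻¹ := fun k => by ring
  simp only [hcomm]
  rw [mul_sub, Finset.mul_sum, Finset.mul_sum]
  congr 1
  · rw [mul_comm]
  · apply Finset.sum_congr rfl
    intro j hj
    have hjn := Finset.mem_range.mp hj
    have h1 : algebraMap ℝ K (x j) ≠ 0 := hA j hjn
    have h2 : z - algebraMap ℝ K (x j) ≠ 0 := sub_ne_zero.mpr (hz j hjn)
    rw [← Finset.mul_prod_erase _ (fun k => 1 - z * (algebraMap ℝ K (x k))⁻¹) hj]
    field_simp
    ring

/-- Let `p(x) = ∏_{j=1}^n (1 − x/x_j)` be a hyperbolic polynomial with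
positive zeros `0 < x₁ ≤ x₂ ≤ ⋯ ≤ xₙ`, normalized by `p(0) = 1`. Then for any real
constant `c`, the polynomial `q(x) = c p(x) − x p'(x)` has only real zeros; moreover,
`q` has a smallest (real) zero `η₁` lying in `(0, x₁)` if and only if `c < 0`. -/
theorem hyperbolic_linear_combination (n : ℕ) (hn : 1 ≤ n) (x : ℕ → ℝ)
    (hpos : ∀ j, j < n → 0 < x j)
    (hmono : ∀ i j, i ≤ j → j < n → x i ≤ x j)
    (P : Polynomial ℝ)
    (hP : P = ∏ j ∈ Finset.range n, (1 - Polynomial.C (x j)⁻¹ * Polynomial.X))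
    (c : ℝ) (Q : Polynomial ℝ)
    (hQ : Q = Polynomial.C c * P - Polynomial.X * Polynomial.derivative P) :
    (∀ z : ℂ, Polynomial.aeval z Q = 0 → z.im = 0) ∧
    ((∃ η : ℝ, IsLeast {t : ℝ | Q.eval t = 0} η ∧ η ∈ Set.Ioo 0 (x 0)) ↔ c < 0) := by
  have hx0 : 0 < x 0 := hpos 0 hn
  have hxne : ∀ j, j < n → x j ≠ 0 := fun j hj => (hpos j hj).ne'
  have hne : (Finset.range n).Nonempty := ⟨0, Finset.mem_range.mpr hn⟩
  -- real evaluation identity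
  have hreal : ∀ t : ℝ, (∀ j, j < n → t ≠ x j) →
      Q.eval t = (∏ j ∈ Finset.range n, (1 - t * (x j)⁻¹)) *
        (c - ∑ j ∈ Finset.range n, t / (t - x j)) := by
    intro t ht
    have h := key_identity (K := ℝ) n x hxne c P Q hP hQ t (by simpa using ht)
    simpa [Polynomial.coe_aeval_eq_eval] using h
  have hprodpos : ∀ t : ℝ, t < x 0 → 0 < ∏ j ∈ Finset.range n, (1 - t * (x j)⁻¹) := by
    intro t ht
    apply Finset.prod_pos
    intro j hj
    have hj' := Finset.mem_range.mp hj
    have hxj : 0 < x j := hpos j hj'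
    have htj : t < x j := lt_of_lt_of_le ht (hmono 0 j (Nat.zero_le j) hj')
    have h1 : t * (x j)⁻¹ < 1 := by
      rw [mul_inv_lt_iff₀ hxj, one_mul]
      exact htj
    linarith
  have htlt : ∀ t : ℝ, t < x 0 → ∀ j, j < n → t ≠ x j := by
    intro t ht j hj
    exact ne_of_lt (lt_of_lt_of_le ht (hmono 0 j (Nat.zero_le j) hj))
  constructor
  · -- all roots real
    intro z hzQ
    by_contra him
    have hz : ∀ j, j < n → z ≠ algebraMap ℝ ℂ (x j) := by
      intro j hj h
      apply him
      rw [h]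
      simp
    have hid := key_identity n x hxne c P Q hP hQ z hz
    rw [hzQ] at hid
    have hprod : (∏ j ∈ Finset.range n, ((1:ℂ) - z * (algebraMap ℝ ℂ (x j))⁻¹)) ≠ 0 := by
      rw [Finset.prod_ne_zero_iff]
      intro j hj hzero
      have hjn := Finset.mem_range.mp hj
      have hAne : (algebraMap ℝ ℂ (x j)) ≠ 0 := by
        simpa using hxne j hjn
      apply hz j hjn
      have h1 : z * (algebraMap ℝ ℂ (x j))⁻¹ = 1 := by linear_combination -hzero
      exact (mul_inv_eq_one₀ hAne).mp h1
    have hsum : (algebraMap ℝ ℂ c) = ∑ j ∈ Finset.range n, z / (z - algebraMap ℝ ℂ (x j)) := by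
      have h0 := (mul_eq_zero.mp hid.symm).resolve_left hprod
      exact sub_eq_zero.mp h0
    have him0 : (0:ℝ) = ∑ j ∈ Finset.range n, (z / (z - (algebraMap ℝ ℂ (x j)))).im := by
      have := congrArg Complex.im hsum
      simpa [Complex.im_sum] using this
    have hterm : ∀ j ∈ Finset.range n,
        (z / (z - (algebraMap ℝ ℂ (x j)))).im
          = -(x j) * z.im / Complex.normSq (z - algebraMap ℝ ℂ (x j)) := by
      intro j hj
      rw [Complex.div_im]
      simp only [Complex.sub_im, Complex.sub_re, Complex.ofReal_im, Complex.ofReal_re,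
        Complex.coe_algebraMap]
      ring
    rw [Finset.sum_congr rfl hterm] at him0
    have hNpos : ∀ j, j < n → 0 < Complex.normSq (z - algebraMap ℝ ℂ (x j)) := by
      intro j hj
      apply Complex.normSq_pos.mpr
      exact sub_ne_zero.mpr (hz j hj)
    rcases lt_trichotomy z.im 0 with h | h | h
    · have : (0:ℝ) < ∑ j ∈ Finset.range n,
          -(x j) * z.im / Complex.normSq (z - algebraMap ℝ ℂ (x j)) := by
        apply Finset.sum_pos
        · intro j hj
          have hjn := Finset.mem_range.mp hj
          exact div_pos (by nlinarith [hpos j hjn]) (hNpos j hjn)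
        · exact hne
      linarith
    · exact him h
    · have hlt : ∑ j ∈ Finset.range n,
          -(x j) * z.im / Complex.normSq (z - algebraMap ℝ ℂ (x j))
            < ∑ _j ∈ Finset.range n, (0:ℝ) := by
        apply Finset.sum_lt_sum_of_nonempty hne
        intro j hj
        have hjn := Finset.mem_range.mp hj
        exact div_neg_of_neg_of_pos (by nlinarith [hpos j hjn]) (hNpos j hjn)
      rw [Finset.sum_const, smul_zero] at hlt
      linarith
  · constructor
    · rintro ⟨η, ⟨hηS, -⟩, hη01⟩
      obtain ⟨hη0, hη1⟩ := Set.mem_Ioo.mp hη01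
      have hηroot : Q.eval η = 0 := hηS
      have hid := hreal η (htlt η hη1)
      rw [hηroot] at hid
      have hpp := hprodpos η hη1
      have hcf : c = ∑ j ∈ Finset.range n, η / (η - x j) := by
        have h0 : c - ∑ j ∈ Finset.range n, η / (η - x j) = 0 := by
          by_contra h
          exact h (by
            rcases mul_eq_zero.mp hid.symm with h' | h'
            · exact absurd h' hpp.ne'
            · exact h')
        linarith
      have hlt : ∑ j ∈ Finset.range n, η / (η - x j) < ∑ _j ∈ Finset.range n, (0:ℝ) := by
        apply Finset.sum_lt_sum_of_nonempty hne
        intro j hj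
        have hjn := Finset.mem_range.mp hj
        have hxj : η < x j := lt_of_lt_of_le hη1 (hmono 0 j (Nat.zero_le j) hjn)
        exact div_neg_of_pos_of_neg hη0 (by linarith)
      rw [Finset.sum_const, smul_zero] at hlt
      linarith
    · intro hc
      have hc1 : (0:ℝ) < 1 - c := by linarith
      have h12c : (0:ℝ) < 1 - 2*c := by linarith
      set t₀ : ℝ := x 0 * ((1 - 2*c) / (2*(1 - c))) with ht₀def
      have ht₀pos : 0 < t₀ := by
        apply mul_pos hx0
        positivity
      have ht₀lt : t₀ < x 0 := by
        rw [ht₀def]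
        nth_rewrite 2 [← mul_one (x 0)]
        apply mul_lt_mul_of_pos_left _ hx0
        rw [div_lt_one (by linarith)]
        linarith
      -- Q at 0
      have hQ0 : Q.eval 0 = c := by
        rw [hreal 0 (htlt 0 hx0)]
        simp
      -- Q at t₀ is positive
      have hden : t₀ - x 0 ≠ 0 := by linarith
      have hfrac : t₀ / (t₀ - x 0) = 2*c - 1 := by
        rw [div_eq_iff hden, ht₀def]
        field_simp
        ring
      have hsumle : ∑ j ∈ Finset.range n, t₀ / (t₀ - x j) ≤ 2*c - 1 := by
        have hsub : ({0} : Finset ℕ) ⊆ Finset.range n := by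
          intro k hk
          rw [Finset.mem_singleton.mp hk]
          exact Finset.mem_range.mpr hn
        have hneg := Finset.sum_le_sum_of_subset_of_nonneg hsub
          (f := fun j => -(t₀ / (t₀ - x j)))
          (by
            intro j hj _
            have hjn := Finset.mem_range.mp hj
            have hxj : t₀ < x j := lt_of_lt_of_le ht₀lt (hmono 0 j (Nat.zero_le j) hjn)
            exact neg_nonneg.mpr (div_neg_of_pos_of_neg ht₀pos (by linarith)).le)
        rw [Finset.sum_singleton, Finset.sum_neg_distrib, hfrac] at hneg
        linarith
      have hQt₀ : 0 < Q.eval t₀ := by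
        rw [hreal t₀ (htlt t₀ ht₀lt)]
        apply mul_pos (hprodpos t₀ ht₀lt)
        linarith
      -- roots are positive
      have hrootpos : ∀ t : ℝ, Q.eval t = 0 → 0 < t := by
        intro t ht
        by_contra h
        push_neg at h
        have htx : t < x 0 := lt_of_le_of_lt h hx0
        have hid := hreal t (htlt t htx)
        rw [ht] at hid
        have hsum0 : 0 ≤ ∑ j ∈ Finset.range n, t / (t - x j) := by
          apply Finset.sum_nonneg
          intro j hj
          have hjn := Finset.mem_range.mp hj
          have hxj := hpos j hjn
          exact div_nonneg_of_nonpos h (by linarith)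
        have := mul_pos (hprodpos t htx) (show (0:ℝ) < -(c - ∑ j ∈ Finset.range n, t / (t - x j)) by linarith)
        rw [mul_neg, ← hid] at this
        simp at this
      -- IVT
      have hcont : ContinuousOn (fun t : ℝ => Q.eval t) (Set.Icc 0 t₀) :=
        (Polynomial.continuous Q).continuousOn
      have hIVT := intermediate_value_Ioo ht₀pos.le hcont
      have h0mem : (0:ℝ) ∈ Set.Ioo (Q.eval 0) (Q.eval t₀) := by
        rw [hQ0]
        exact ⟨hc, hQt₀⟩
      obtain ⟨η', hη'mem, hη'val⟩ := hIVT h0mem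
      obtain ⟨hη'0, hη'1⟩ := Set.mem_Ioo.mp hη'mem
      set S : Set ℝ := {t : ℝ | Q.eval t = 0} with hSdef
      have hSne : S.Nonempty := ⟨η', hη'val⟩
      have hSbdd : BddBelow S := ⟨0, fun t ht => (hrootpos t ht).le⟩
      have hSclosed : IsClosed S := isClosed_eq (Polynomial.continuous Q) continuous_const
      have hmem := hSclosed.csInf_mem hSne hSbdd
      refine ⟨sInf S, ⟨hmem, fun t ht => csInf_le hSbdd ht⟩, ?_, ?_⟩
      · exact hrootpos _ hmem
      · have hle : sInf S ≤ η' := csInf_le hSbdd hη'val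
        linarith
end

section
/- Consider power series f(x) = Σ_{n≥0} aₙ x^{2n} and g(x) = Σ_{n≥0} bₙ x^{2n} with aₙ ∈ ℝ and bₙ > 0 for all n ≥ 0, both convergent on (−r, r) for some r > 0. If the sequence {aₙ/bₙ}_{n≥0} is increasing (respectively, decreasing), then the function x ↦ f(x)/g(x) is increasing (respectively, decreasing) on (0, r). -/
open scoped BigOperators

lemma prod_summable_aux (f g : ℕ → ℝ) (hf : Summable (fun n => ‖f n‖))
    (hg : Summable (fun n => ‖g n‖)) :
    Summable (fun p : ℕ × ℕ => f p.1 * g p.2) :=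
  summable_mul_of_summable_norm hf hg

lemma tsum_mul_aux (f g : ℕ → ℝ) (hf : Summable (fun n => ‖f n‖))
    (hg : Summable (fun n => ‖g n‖)) :
    (∑' n, f n) * (∑' n, g n) = ∑' p : ℕ × ℕ, f p.1 * g p.2 :=
  tsum_mul_tsum_of_summable_norm hf hg


lemma abs_summable_aux (r : ℝ) (a : ℕ → ℝ)
    (ha : ∀ x ∈ Set.Ioo (-r) r, Summable (fun n : ℕ => a n * x ^ (2 * n)))
    {x : ℝ} (hx : x ∈ Set.Ioo (0:ℝ) r) :
    Summable (fun n : ℕ => ‖a n * x ^ (2 * n)‖) := by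
  obtain ⟨hx0, hxr⟩ := hx
  obtain ⟨t, hxt, htr⟩ := exists_between hxr
  have ht0 : 0 < t := lt_trans hx0 hxt
  have hsum := ha t ⟨by linarith, htr⟩
  obtain ⟨C, hC⟩ := (hsum.tendsto_atTop_zero.norm.bddAbove_range)
  have hC' : ∀ n, ‖a n * t ^ (2 * n)‖ ≤ C := fun n => hC ⟨n, rfl⟩
  have hq0 : (0:ℝ) ≤ (x / t) ^ 2 := by positivity
  have hq1 : (x / t) ^ 2 < 1 := by
    have : x / t < 1 := (div_lt_one ht0).mpr hxt
    calc (x / t) ^ 2 < 1 ^ 2 := pow_lt_pow_left₀ this (by positivity) (by norm_num)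
      _ = 1 := one_pow 2
  have hgeom : Summable (fun n : ℕ => C * ((x / t) ^ 2) ^ n) :=
    (summable_geometric_of_lt_one hq0 hq1).mul_left C
  apply hgeom.of_nonneg_of_le (fun n => norm_nonneg _)
  intro n
  have hxn : x ^ (2 * n) = t ^ (2 * n) * ((x / t) ^ 2) ^ n := by
    rw [← pow_mul, div_pow]
    rw [eq_comm, mul_div_assoc', mul_comm, mul_div_assoc]
    rw [div_self (pow_ne_zero _ ht0.ne'), mul_one]
  have hnn : ‖((x / t) ^ 2) ^ n‖ = ((x / t) ^ 2) ^ n := Real.norm_of_nonneg (pow_nonneg hq0 n)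
  rw [norm_mul, hxn, norm_mul, ← mul_assoc, ← norm_mul, hnn]
  exact mul_le_mul_of_nonneg_right (hC' n) (pow_nonneg hq0 n)


set_option maxHeartbeats 1600000 in
lemma mono_core (r : ℝ) (a b : ℕ → ℝ) (hb : ∀ n, 0 < b n)
    (ha : ∀ x ∈ Set.Ioo (-r) r, Summable (fun n : ℕ => a n * x ^ (2 * n)))
    (hbs : ∀ x ∈ Set.Ioo (-r) r, Summable (fun n : ℕ => b n * x ^ (2 * n)))
    (habs : ∀ x ∈ Set.Ioo (0:ℝ) r, Summable (fun n : ℕ => ‖a n * x ^ (2 * n)‖))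
    (hbabs : ∀ x ∈ Set.Ioo (0:ℝ) r, Summable (fun n : ℕ => ‖b n * x ^ (2 * n)‖))
    (hmono : Monotone (fun n : ℕ => a n / b n)) :
    MonotoneOn (fun x : ℝ => (∑' n : ℕ, a n * x ^ (2 * n)) / (∑' n : ℕ, b n * x ^ (2 * n)))
      (Set.Ioo 0 r) := by
  intro x hx y hy hxy
  obtain ⟨hx0, hxr⟩ := hx
  obtain ⟨hy0, hyr⟩ := hy
  have hax := habs x ⟨hx0, hxr⟩
  have hay := habs y ⟨hy0, hyr⟩
  have hbx := hbabs x ⟨hx0, hxr⟩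
  have hby := hbabs y ⟨hy0, hyr⟩
  -- positivity of g
  have gpos : ∀ z : ℝ, 0 < z → z < r → 0 < ∑' n : ℕ, b n * z ^ (2 * n) := by
    intro z hz0 hzr
    exact Summable.tsum_pos (hbs z ⟨by linarith, hzr⟩)
      (fun n => (mul_pos (hb n) (pow_pos hz0 _)).le) 0 (mul_pos (hb 0) (pow_pos hz0 _))
  have gx : 0 < ∑' n : ℕ, b n * x ^ (2 * n) := gpos x hx0 hxr
  have gy : 0 < ∑' n : ℕ, b n * y ^ (2 * n) := gpos y hy0 hyr
  simp only
  rw [div_le_div_iff₀ gx gy]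
  -- key : f(x) g(y) ≤ f(y) g(x)
  set F : ℕ × ℕ → ℝ := fun p =>
    a p.1 * x ^ (2 * p.1) * (b p.2 * y ^ (2 * p.2)) -
    a p.1 * y ^ (2 * p.1) * (b p.2 * x ^ (2 * p.2)) with hF
  have hS1 : Summable (fun p : ℕ × ℕ => a p.1 * x ^ (2 * p.1) * (b p.2 * y ^ (2 * p.2))) :=
    prod_summable_aux _ _ hax hby
  have hS2 : Summable (fun p : ℕ × ℕ => a p.1 * y ^ (2 * p.1) * (b p.2 * x ^ (2 * p.2))) :=
    prod_summable_aux _ _ hay hbx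
  have hSF : Summable F := hS1.sub hS2
  have hkey : (∑' n : ℕ, a n * x ^ (2 * n)) * (∑' n : ℕ, b n * y ^ (2 * n)) -
      (∑' n : ℕ, a n * y ^ (2 * n)) * (∑' n : ℕ, b n * x ^ (2 * n)) = ∑' p : ℕ × ℕ, F p := by
    rw [tsum_mul_aux _ _ hax hby, tsum_mul_aux _ _ hay hbx, ← Summable.tsum_sub hS1 hS2]
  have hswap : (∑' p : ℕ × ℕ, F p) = ∑' p : ℕ × ℕ, F p.swap :=
    ((Equiv.prodComm ℕ ℕ).tsum_eq F).symm
  have hSFswap : Summable (fun p : ℕ × ℕ => F p.swap) :=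
    (Equiv.prodComm ℕ ℕ).summable_iff.mpr hSF
  have hdouble : 2 * (∑' p : ℕ × ℕ, F p) = ∑' p : ℕ × ℕ, (F p + F p.swap) := by
    rw [Summable.tsum_add hSF hSFswap, ← hswap]; ring
  have hterm : ∀ p : ℕ × ℕ, F p + F p.swap ≤ 0 := by
    rintro ⟨n, m⟩
    have key : ∀ n m : ℕ, n ≤ m → F (n, m) + F (m, n) ≤ 0 := by
      intro n m hnm
      have hab : a n * b m ≤ a m * b n := by
        have := hmono hnm
        simp only at this
        rwa [div_le_div_iff₀ (hb n) (hb m)] at this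
      have hpow : y ^ (2 * n) * x ^ (2 * m) ≤ x ^ (2 * n) * y ^ (2 * m) := by
        obtain ⟨k, rfl⟩ := Nat.exists_eq_add_of_le hnm
        rw [Nat.mul_add, pow_add, pow_add]
        calc y ^ (2 * n) * (x ^ (2 * n) * x ^ (2 * k))
            = x ^ (2 * n) * y ^ (2 * n) * x ^ (2 * k) := by ring
          _ ≤ x ^ (2 * n) * y ^ (2 * n) * y ^ (2 * k) := by
              apply mul_le_mul_of_nonneg_left (pow_le_pow_left₀ hx0.le hxy _) (by positivity)
          _ = x ^ (2 * n) * (y ^ (2 * n) * y ^ (2 * k)) := by ring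
      have expand : F (n, m) + F (m, n) =
          (a n * b m - a m * b n) * (x ^ (2 * n) * y ^ (2 * m) - y ^ (2 * n) * x ^ (2 * m)) := by
        simp only [hF]; ring
      rw [expand]
      exact mul_nonpos_of_nonpos_of_nonneg (by linarith) (by linarith)
    rcases le_total n m with h | h
    · exact key n m h
    · have := key m n h
      simpa [add_comm] using this
  have hsum_le : (∑' p : ℕ × ℕ, (F p + F p.swap)) ≤ 0 := tsum_nonpos hterm
  have h2 : 2 * (∑' p : ℕ × ℕ, F p) ≤ 0 := by rw [hdouble]; exact hsum_le
  have h3 : (∑' p : ℕ × ℕ, F p) ≤ 0 := by linarith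
  linarith [hkey, h3]

/-- (Biernacki–Krzyż type lemma for even power series.)
Let `f(x) = Σ aₙ x^{2n}` and `g(x) = Σ bₙ x^{2n}` with `bₙ > 0`, both convergent on
`(−r, r)`. If `{aₙ/bₙ}` is increasing (resp. decreasing), then `x ↦ f(x)/g(x)` is
increasing (resp. decreasing) on `(0, r)`. -/
theorem monotone_quotient_even_power_series (r : ℝ) (hr : 0 < r) (a b : ℕ → ℝ)
    (hb : ∀ n, 0 < b n)
    (ha : ∀ x ∈ Set.Ioo (-r) r, Summable (fun n : ℕ => a n * x ^ (2 * n)))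
    (hbs : ∀ x ∈ Set.Ioo (-r) r, Summable (fun n : ℕ => b n * x ^ (2 * n))) :
    (Monotone (fun n : ℕ => a n / b n) →
      MonotoneOn (fun x : ℝ => (∑' n : ℕ, a n * x ^ (2 * n)) / (∑' n : ℕ, b n * x ^ (2 * n)))
        (Set.Ioo 0 r)) ∧
    (Antitone (fun n : ℕ => a n / b n) →
      AntitoneOn (fun x : ℝ => (∑' n : ℕ, a n * x ^ (2 * n)) / (∑' n : ℕ, b n * x ^ (2 * n)))
        (Set.Ioo 0 r)) := by
  have habs : ∀ x ∈ Set.Ioo (0:ℝ) r, Summable (fun n : ℕ => ‖a n * x ^ (2 * n)‖) :=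
    fun x hx => abs_summable_aux r a ha hx
  have hbabs : ∀ x ∈ Set.Ioo (0:ℝ) r, Summable (fun n : ℕ => ‖b n * x ^ (2 * n)‖) :=
    fun x hx => abs_summable_aux r b hbs hx
  constructor
  · exact fun hm => mono_core r a b hb ha hbs habs hbabs hm
  · intro hanti
    have ha' : ∀ x ∈ Set.Ioo (-r) r, Summable (fun n : ℕ => (-a n) * x ^ (2 * n)) := by
      intro x hx
      simpa only [neg_mul] using (ha x hx).neg
    have habs' : ∀ x ∈ Set.Ioo (0:ℝ) r, Summable (fun n : ℕ => ‖(-a n) * x ^ (2 * n)‖) := by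
      intro x hx
      simpa only [neg_mul, norm_neg] using habs x hx
    have hm : Monotone (fun n : ℕ => (-a n) / b n) := by
      intro n m hnm
      simp only [neg_div, neg_le_neg_iff]
      exact hanti hnm
    have key := mono_core r (fun n => -a n) b hb ha' hbs habs' hbabs hm
    intro x hx y hy hxy
    have := key hx hy hxy
    simp only [neg_mul] at this
    rw [tsum_neg, tsum_neg, neg_div, neg_div, neg_le_neg_iff] at this
    exact this
end
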